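/- Let k ≥ 2 be an integer and let m > 0 satisfy m⁻¹ − m > (k−1)(cot α + tan α) + (tan α − cot α) for some α ∈ (π/4, π/2). Then m < 1, m < cot α, and if additionally k > 2, then m⁻¹ > 2 tan α + cot α. -/
import Mathlib


/-- If `m > 0` satisfies `m⁻¹ − m > (k−1)(cot α + tan α) + (tan α − cot α)` with
`α ∈ (π/4, π/2)` and `k ≥ 2`, then `m < 1`, `m < cot α`, and for `k > 2` also
`m⁻¹ > 2 tan α + cot α`. -/
theorem parameter_bounds (k : ℕ) (hk : 2 ≤ k) (α : ℝ)
    (hα : α ∈ Set.Ioo (Real.pi / 4) (Real.pi / 2)) (m : ℝ) (hm : 0 < m)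
    (h : ((k : ℝ) - 1) * (Real.cot α + Real.tan α) + (Real.tan α - Real.cot α) < m⁻¹ - m) :
    m < 1 ∧ m < Real.cot α ∧ (2 < k → 2 * Real.tan α + Real.cot α < m⁻¹) := by
  obtain ⟨h1, h2⟩ := hα
  have hpi := Real.pi_pos
  have ht : 1 < Real.tan α := by
    have := Real.tan_lt_tan_of_nonneg_of_lt_pi_div_two (by positivity) h2 h1
    rwa [Real.tan_pi_div_four] at this
  have hcos : 0 < Real.cos α := Real.cos_pos_of_mem_Ioo ⟨by linarith, h2⟩
  have hsin : 0 < Real.sin α := Real.sin_pos_of_pos_of_lt_pi (by linarith) (by linarith)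
  have hcot : Real.cot α = (Real.tan α)⁻¹ := by
    rw [Real.cot_eq_cos_div_sin, Real.tan_eq_sin_div_cos]
    field_simp
  have hcotpos : 0 < Real.cot α := by rw [hcot]; positivity
  have hcotlt : Real.cot α < 1 := by
    rw [hcot]; exact inv_lt_one_of_one_lt₀ ht
  have hk2 : (2 : ℝ) ≤ (k : ℝ) := by exact_mod_cast hk
  have hct : Real.cot α + Real.tan α > 0 := by linarith
  have hbig : 2 * Real.tan α < m⁻¹ - m := by nlinarith
  have hm1 : m < 1 := by
    rcases lt_or_ge m 1 with h' | h'
    · exact h'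
    · exfalso
      have : m⁻¹ ≤ 1 := inv_le_one_of_one_le₀ h'
      linarith
  have hmcot : m < Real.cot α := by
    by_contra hge
    push_neg at hge
    have hinv : m⁻¹ ≤ Real.tan α := by
      rw [hcot] at hge
      have := inv_anti₀ (by positivity) hge
      rwa [inv_inv] at this
    linarith
  refine ⟨hm1, hmcot, fun hk3 => ?_⟩
  have hk3' : (3 : ℝ) ≤ (k : ℝ) := by exact_mod_cast hk3
  nlinarith
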